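/- Let 1 < β < 2, a > 0 and λ₁ > 0. Then there exists a constant C₃ > 0 (depending only on β, a, λ₁) such that for every λ ≥ λ₁ and every t ∈ [0, a] one has t^{β−1} · E_{β,β}(λ t^β) ≤ C₃ · exp(λ^{1/β} t). -/

import Mathlib

open Real

/-- The Mittag-Leffler function `E_{β,γ}(z) = ∑_{k=0}^∞ z^k / Γ(βk + γ)` for real `z`. -/
noncomputable def mittagLeffler (β γ z : ℝ) : ℝ :=
  ∑' k : ℕ, z ^ k / Real.Gamma (β * k + γ)

section Aux
open Nat

private lemma exp_tsum' (x : ℝ) : Real.exp x = ∑' n : ℕ, x ^ n / n ! := by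
  rw [Real.exp_eq_exp_ℝ, NormedSpace.exp_eq_tsum_div]

private lemma gamma_lb (m : ℕ) (u : ℝ) (h1 : (m : ℝ) + 1 ≤ u) (h2 : u ≤ (m : ℝ) + 2) :
    ((m + 1)! : ℝ) * ((m : ℝ) + 2) ^ (u - ((m : ℝ) + 2)) ≤ Real.Gamma u := by
  have hm2 : (0:ℝ) < (m:ℝ) + 2 := by positivity
  have hu0 : (0:ℝ) < u := by
    have : (0:ℝ) ≤ (m:ℝ) := Nat.cast_nonneg m
    linarith
  have hGu : 0 < Real.Gamma u := Real.Gamma_pos_of_pos hu0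
  have hGm2 : Real.Gamma ((m:ℝ) + 2) = ((m+1)! : ℝ) := by
    have := Real.Gamma_nat_eq_factorial (m+1)
    rw [← this]; norm_num [Nat.cast_add]; ring_nf
  have hGm3 : Real.Gamma ((m:ℝ) + 3) = ((m+2)! : ℝ) := by
    have := Real.Gamma_nat_eq_factorial (m+2)
    rw [← this]; norm_num [Nat.cast_add]; ring_nf
  rcases eq_or_lt_of_le h2 with rfl | hlt
  · simp [hGm2]
  · -- slope inequality
    have hs := Real.convexOn_log_Gamma.slope_mono_adjacent
      (x := u) (y := (m:ℝ)+2) (z := (m:ℝ)+3)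
      (Set.mem_Ioi.mpr hu0) (Set.mem_Ioi.mpr (by linarith)) hlt (by linarith)
    simp only [Function.comp] at hs
    have hstep : Real.log (Real.Gamma ((m:ℝ)+3)) - Real.log (Real.Gamma ((m:ℝ)+2))
        = Real.log ((m:ℝ) + 2) := by
      rw [hGm2, hGm3]
      have : ((m+2)! : ℝ) = ((m:ℝ)+2) * ((m+1)! : ℝ) := by
        rw [Nat.factorial_succ]; push_cast; ring
      rw [this, Real.log_mul (by positivity) (by positivity)]; ring
    have hden : (0:ℝ) < (m:ℝ) + 2 - u := by linarith
    rw [div_le_div_iff₀ hden (by norm_num), hstep] at hs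
    have hlog : Real.log (((m+1)! : ℝ)) + (u - ((m:ℝ)+2)) * Real.log ((m:ℝ)+2)
        ≤ Real.log (Real.Gamma u) := by
      rw [← hGm2]; nlinarith [hs]
    calc ((m + 1)! : ℝ) * ((m : ℝ) + 2) ^ (u - ((m : ℝ) + 2))
        = Real.exp (Real.log (((m+1)! : ℝ)) + (u - ((m:ℝ)+2)) * Real.log ((m:ℝ)+2)) := by
          rw [Real.exp_add, Real.exp_log (by positivity), Real.rpow_def_of_pos hm2]
          ring_nf
      _ ≤ Real.exp (Real.log (Real.Gamma u)) := Real.exp_le_exp.mpr hlog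
      _ = Real.Gamma u := Real.exp_log hGu

private lemma term_bound {x s : ℝ} (hx : 0 < x) (hs : 0 < s) :
    x ^ s / Real.Gamma (s + 1) ≤
      2 * x ^ ⌊s⌋₊ / (⌊s⌋₊)! + x ^ (⌊s⌋₊ + 1) / (⌊s⌋₊ + 1)! := by
  set m := ⌊s⌋₊ with hm
  have hms : (m:ℝ) ≤ s := Nat.floor_le hs.le
  have hsm : s < (m:ℝ) + 1 := Nat.lt_floor_add_one s
  have hm2 : (0:ℝ) < (m:ℝ) + 2 := by positivity
  have hG : ((m + 1)! : ℝ) * ((m:ℝ) + 2) ^ (s + 1 - ((m:ℝ) + 2)) ≤ Real.Gamma (s + 1) :=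
    gamma_lb m (s + 1) (by linarith) (by linarith)
  have hGpos : 0 < Real.Gamma (s + 1) := Real.Gamma_pos_of_pos (by linarith)
  have hApos : (0:ℝ) < ((m + 1)! : ℝ) * ((m:ℝ) + 2) ^ (s + 1 - ((m:ℝ) + 2)) := by positivity
  have key : x ^ s / Real.Gamma (s + 1) ≤
      x ^ s * ((m:ℝ) + 2) ^ ((m:ℝ) + 1 - s) / ((m + 1)! : ℝ) := by
    have h1 : x ^ s / Real.Gamma (s + 1) ≤
        x ^ s / (((m + 1)! : ℝ) * ((m:ℝ) + 2) ^ (s + 1 - ((m:ℝ) + 2))) := by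
      apply div_le_div_of_nonneg_left (by positivity) hApos hG
    refine h1.trans_eq ?_
    rw [show s + 1 - ((m:ℝ) + 2) = -((m:ℝ) + 1 - s) by ring, Real.rpow_neg hm2.le]
    field_simp
  rcases le_or_gt x ((m:ℝ) + 2) with hxle | hxgt
  · have h2 : x ^ s * ((m:ℝ) + 2) ^ ((m:ℝ) + 1 - s) ≤ x ^ m * ((m:ℝ) + 2) := by
      have hxs : x ^ s = x ^ (m:ℝ) * x ^ (s - (m:ℝ)) := by
        rw [← Real.rpow_add hx]; ring_nf
      have h3 : x ^ (s - (m:ℝ)) ≤ ((m:ℝ) + 2) ^ (s - (m:ℝ)) :=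
        Real.rpow_le_rpow hx.le hxle (by linarith)
      calc x ^ s * ((m:ℝ) + 2) ^ ((m:ℝ) + 1 - s)
          = x ^ (m:ℝ) * (x ^ (s - (m:ℝ)) * ((m:ℝ) + 2) ^ ((m:ℝ) + 1 - s)) := by
            rw [hxs]; ring
        _ ≤ x ^ (m:ℝ) * (((m:ℝ) + 2) ^ (s - (m:ℝ)) * ((m:ℝ) + 2) ^ ((m:ℝ) + 1 - s)) := by
            apply mul_le_mul_of_nonneg_left _ (Real.rpow_nonneg hx.le _)
            exact mul_le_mul_of_nonneg_right h3 (Real.rpow_nonneg hm2.le _)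
        _ = x ^ (m:ℝ) * ((m:ℝ) + 2) ^ ((1:ℝ)) := by
            rw [← Real.rpow_add hm2]; ring_nf
        _ = x ^ m * ((m:ℝ) + 2) := by rw [Real.rpow_natCast, Real.rpow_one]
    have h4 : x ^ s * ((m:ℝ) + 2) ^ ((m:ℝ) + 1 - s) / ((m + 1)! : ℝ) ≤ 2 * x ^ m / (m)! := by
      have hfac : ((m + 1)! : ℝ) = ((m:ℝ) + 1) * ((m)! : ℝ) := by
        rw [Nat.factorial_succ]; push_cast; ring
      rw [div_le_div_iff₀ (by positivity) (by positivity), hfac]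
      have hxm : (0:ℝ) ≤ x ^ m := by positivity
      have e1 := mul_le_mul_of_nonneg_right h2 (show (0:ℝ) ≤ ((m)! : ℝ) by positivity)
      nlinarith [e1, mul_nonneg (mul_nonneg hxm (show (0:ℝ) ≤ ((m)! : ℝ) by positivity))
        (Nat.cast_nonneg (α := ℝ) m)]
    refine (key.trans h4).trans ?_
    have : (0:ℝ) ≤ x ^ (m + 1) / ((m + 1)! : ℝ) := by positivity
    linarith
  · have h2 : x ^ s * ((m:ℝ) + 2) ^ ((m:ℝ) + 1 - s) ≤ x ^ (m + 1) := by
      have h3 : ((m:ℝ) + 2) ^ ((m:ℝ) + 1 - s) ≤ x ^ ((m:ℝ) + 1 - s) :=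
        Real.rpow_le_rpow hm2.le hxgt.le (by linarith)
      calc x ^ s * ((m:ℝ) + 2) ^ ((m:ℝ) + 1 - s)
          ≤ x ^ s * x ^ ((m:ℝ) + 1 - s) :=
            mul_le_mul_of_nonneg_left h3 (Real.rpow_nonneg hx.le _)
        _ = x ^ ((m:ℝ) + 1) := by rw [← Real.rpow_add hx]; ring_nf
        _ = x ^ (m + 1) := by
            rw [← Real.rpow_natCast x (m + 1)]; push_cast; ring_nf
    have h4 : x ^ s * ((m:ℝ) + 2) ^ ((m:ℝ) + 1 - s) / ((m + 1)! : ℝ) ≤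
        x ^ (m + 1) / ((m + 1)! : ℝ) := by
      apply div_le_div_of_nonneg_right h2 (by positivity)
    refine (key.trans h4).trans ?_
    have : (0:ℝ) ≤ 2 * x ^ m / ((m)! : ℝ) := by positivity
    linarith

private lemma sum_bound {β x : ℝ} (hβ1 : 1 < β) (hx : 0 < x) :
    ∑' k : ℕ, x ^ (β * k + β - 1) / Real.Gamma (β * k + β) ≤ 3 * Real.exp x := by
  set s : ℕ → ℝ := fun k => β * k + β - 1 with hsdef
  have hs : ∀ k, 0 < s k := fun k => by
    have : (0:ℝ) ≤ (k:ℝ) := Nat.cast_nonneg k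
    have : (0:ℝ) ≤ β * k := by nlinarith
    simp only [hsdef]; linarith
  set m : ℕ → ℕ := fun k => ⌊s k⌋₊ with hmdef
  set g : ℕ → ℝ := fun n => x ^ n / (n)! with hgdef
  set F : ℕ → ℝ := fun k => x ^ (s k) / Real.Gamma (s k + 1) with hFdef
  have hmono : StrictMono m := by
    apply strictMono_nat_of_lt_succ
    intro k
    have h1 : s k + 1 ≤ s (k + 1) := by simp only [hsdef]; push_cast; nlinarith
    have : ⌊s k + 1⌋₊ ≤ ⌊s (k+1)⌋₊ := Nat.floor_mono h1
    have h2 : ⌊s k + 1⌋₊ = ⌊s k⌋₊ + 1 := Nat.floor_add_one (hs k).le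
    simp only [hmdef]; omega
  have hinj : Function.Injective m := hmono.injective
  have hinj2 : Function.Injective (fun k => m k + 1) := fun a b h => by
    apply hinj; simpa using Nat.succ_injective h
  have hgsum : Summable g := Real.summable_pow_div_factorial x
  have hg0 : ∀ n, 0 ≤ g n := fun n => by simp only [hgdef]; positivity
  have hbound : ∀ k, F k ≤ 2 * g (m k) + g (m k + 1) := fun k => by
    have := term_bound hx (hs k)
    simp only [hFdef, hgdef, hmdef]
    rw [mul_div_assoc] at this
    exact this
  have hF0 : ∀ k, 0 ≤ F k := fun k => by
    have := Real.Gamma_pos_of_pos (by linarith [hs k] : 0 < s k + 1)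
    simp only [hFdef]; positivity
  have hG1 : Summable (fun k => g (m k)) := hgsum.comp_injective hinj
  have hG2 : Summable (fun k => g (m k + 1)) := hgsum.comp_injective hinj2
  have hGsumm : Summable (fun k => 2 * g (m k) + g (m k + 1)) := (hG1.mul_left 2).add hG2
  have hFsumm : Summable F := Summable.of_nonneg_of_le hF0 hbound hGsumm
  have e1 : ∑' k, g (m k) ≤ Real.exp x := by
    rw [exp_tsum' x]
    exact Summable.tsum_le_tsum_of_inj m hinj (fun c _ => hg0 c) (fun k => le_refl _) hG1 hgsum
  have e2 : ∑' k, g (m k + 1) ≤ Real.exp x := by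
    rw [exp_tsum' x]
    exact Summable.tsum_le_tsum_of_inj _ hinj2 (fun c _ => hg0 c) (fun k => le_refl _) hG2 hgsum
  have main : ∑' k, F k ≤ 3 * Real.exp x := by
    calc ∑' k, F k ≤ ∑' k, (2 * g (m k) + g (m k + 1)) := Summable.tsum_le_tsum hbound hFsumm hGsumm
      _ = 2 * (∑' k, g (m k)) + ∑' k, g (m k + 1) := by
          rw [Summable.tsum_add (hG1.mul_left 2) hG2, tsum_mul_left]
      _ ≤ 2 * Real.exp x + Real.exp x := by
          have h2 : (0:ℝ) ≤ 2 := by norm_num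
          gcongr
      _ = 3 * Real.exp x := by ring
  refine le_trans (le_of_eq ?_) main
  apply tsum_congr
  intro k
  simp only [hFdef, hsdef]
  ring_nf

theorem mittagLeffler_beta_upper_bound' (β a lam₁ : ℝ) (hβ1 : 1 < β) (hβ2 : β < 2)
    (ha : 0 < a) (hlam₁ : 0 < lam₁) :
    ∃ C₃ : ℝ, 0 < C₃ ∧ ∀ lam : ℝ, lam₁ ≤ lam → ∀ t ∈ Set.Icc (0 : ℝ) a,
      t ^ (β - 1) * (∑' k : ℕ, (lam * t ^ β) ^ k / Real.Gamma (β * k + β)) ≤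
        (3 * lam₁ ^ ((1 - β)/β)) * Real.exp (lam ^ (1 / β) * t) := by
  have hβ0 : (0:ℝ) < β := by linarith
  refine ⟨3 * lam₁ ^ ((1 - β)/β), by positivity, ?_⟩
  intro lam hlam t ht
  obtain ⟨ht0, hta⟩ := ht
  have hlam0 : 0 < lam := lt_of_lt_of_le hlam₁ hlam
  rcases eq_or_lt_of_le ht0 with rfl | htpos
  · rw [Real.zero_rpow (by intro h; apply absurd h; intro h'; linarith [sub_eq_zero.mp h'] :
      β - 1 ≠ 0), zero_mul]
    positivity
  · set x := lam ^ (1/β) * t with hxdef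
    have hxpos : 0 < x := mul_pos (Real.rpow_pos_of_pos hlam0 _) htpos
    have hterm : ∀ k : ℕ, t ^ (β - 1) * ((lam * t ^ β) ^ k / Real.Gamma (β * k + β))
        = lam ^ ((1 - β)/β) * (x ^ (β * k + β - 1) / Real.Gamma (β * k + β)) := by
      intro k
      have e1 : (t ^ β) ^ k = t ^ (β * k) := by
        rw [← Real.rpow_natCast (t ^ β) k, ← Real.rpow_mul ht0]
      have e2 : t ^ (β - 1) * t ^ (β * k) = t ^ (β * k + β - 1) := by
        rw [← Real.rpow_add htpos]; ring_nf
      have e3 : x ^ (β * k + β - 1) = lam ^ ((β * k + β - 1)/β) * t ^ (β * k + β - 1) := by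
        rw [hxdef, Real.mul_rpow (Real.rpow_nonneg hlam0.le _) ht0, ← Real.rpow_mul hlam0.le,
          show 1/β * (β * k + β - 1) = (β * k + β - 1)/β by field_simp]
      have e4 : lam ^ ((1 - β)/β) * lam ^ ((β * k + β - 1)/β) = lam ^ (k:ℕ) := by
        rw [← Real.rpow_add hlam0, ← Real.rpow_natCast lam k]
        congr 1
        field_simp
        ring
      have enum : t ^ (β - 1) * (lam * t ^ β) ^ k
          = lam ^ ((1 - β)/β) * x ^ (β * k + β - 1) := by
        rw [mul_pow, e1, e3, ← mul_assoc (lam ^ ((1 - β)/β)), e4, ← e2]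
        ring
      rw [← mul_div_assoc, ← mul_div_assoc, enum]
    calc t ^ (β - 1) * (∑' k : ℕ, (lam * t ^ β) ^ k / Real.Gamma (β * k + β))
        = ∑' k : ℕ, t ^ (β - 1) * ((lam * t ^ β) ^ k / Real.Gamma (β * k + β)) := by
          rw [tsum_mul_left]
      _ = lam ^ ((1 - β)/β) * ∑' k : ℕ, x ^ (β * k + β - 1) / Real.Gamma (β * k + β) := by
          rw [← tsum_mul_left]; exact tsum_congr hterm
      _ ≤ lam₁ ^ ((1 - β)/β) * (3 * Real.exp x) := by
          apply mul_le_mul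
          · exact Real.rpow_le_rpow_of_nonpos hlam₁ hlam
              (by apply div_nonpos_of_nonpos_of_nonneg <;> linarith)
          · have := sum_bound hβ1 hxpos
            calc ∑' k : ℕ, x ^ (β * k + β - 1) / Real.Gamma (β * k + β)
                = ∑' k : ℕ, x ^ (β * (k:ℕ) + β - 1) / Real.Gamma (β * (k:ℕ) + β - 1 + 1) := by
                  apply tsum_congr; intro k; ring_nf
              _ ≤ 3 * Real.exp x := by
                  have h2 := sum_bound (β := β) (x := x) hβ1 hxpos
                  refine le_trans (le_of_eq (tsum_congr fun k => ?_)) h2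
                  ring_nf
          · apply tsum_nonneg
            intro k
            have hk : (0:ℝ) < β * k + β := by positivity
            have := Real.Gamma_pos_of_pos hk
            positivity
          · positivity
      _ = (3 * lam₁ ^ ((1 - β)/β)) * Real.exp (lam ^ (1 / β) * t) := by
          rw [← hxdef]; ring

end Aux

/-- for `1 < β < 2`, `a > 0`, `λ₁ > 0` there is `C₃ > 0` (depending only on
`β, a, λ₁`) with `t^{β−1} · E_{β,β}(λ t^β) ≤ C₃ · exp(λ^{1/β} t)` for all `λ ≥ λ₁`,
`t ∈ [0,a]`. -/
theorem mittagLeffler_beta_upper_bound (β a lam₁ : ℝ) (hβ1 : 1 < β) (hβ2 : β < 2)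
    (ha : 0 < a) (hlam₁ : 0 < lam₁) :
    ∃ C₃ : ℝ, 0 < C₃ ∧ ∀ lam : ℝ, lam₁ ≤ lam → ∀ t ∈ Set.Icc (0 : ℝ) a,
      t ^ (β - 1) * mittagLeffler β β (lam * t ^ β) ≤ C₃ * Real.exp (lam ^ (1 / β) * t) := by
  obtain ⟨C₃, hC, h⟩ := mittagLeffler_beta_upper_bound' β a lam₁ hβ1 hβ2 ha hlam₁
  refine ⟨3 * lam₁ ^ ((1 - β) / β), by positivity, fun lam hlam t ht => ?_⟩
  simpa only [mittagLeffler] using h lam hlam t ht
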